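/- Let K be a complete non-archimedean nontrivially valued field, not spherically complete, and let (F, ‖·‖_F), (G, ‖·‖_G) be finite-dimensional indecomposable K-normed spaces with dim F ≥ 2. Let t₁,...,t_m, s₁,...,sₙ > 0. If (Kᵐ, max t_i|·|) ⊕ F is isometrically isomorphic to (Kⁿ, max s_j|·|) ⊕ G (with max norms throughout), then m = n, (Kᵐ, max t_i|·|) ≅ (Kⁿ, max s_j|·|), and F ≅ G. -/

import Mathlib

open Module

/-- A metric space is spherically complete if every nonempty chain of closed balls
has nonempty intersection. -/
def SphericallyComplete (X : Type*) [MetricSpace X] : Prop :=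
  ∀ c : Set (Set X), c.Nonempty → (∀ s ∈ c, ∃ z r, s = Metric.closedBall z r) →
    IsChain (· ⊆ ·) c → (⋂₀ c).Nonempty

/-- A normed space is indecomposable if it does not split as an internal direct sum
of two nonzero subspaces on which the norm is the max norm. -/
def Indecomposable' (K F : Type*) [NormedField K] [NormedAddCommGroup F]
    [NormedSpace K F] : Prop :=
  ¬ ∃ D₁ D₂ : Submodule K F, D₁ ≠ ⊥ ∧ D₂ ≠ ⊥ ∧ D₁ ⊔ D₂ = ⊤ ∧
    ∀ v₁ ∈ D₁, ∀ v₂ ∈ D₂, ‖v₁ + v₂‖ = max ‖v₁‖ ‖v₂‖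

section AuxHelpers

variable {K : Type*} [NontriviallyNormedField K]

lemma aux_bdd {ι : Type*} [Finite ι] (f : ι → ℝ) : BddAbove (Set.range f) :=
  (Set.finite_range f).bddAbove

lemma aux_le_iSup {ι : Type*} [Finite ι] (f : ι → ℝ) (i : ι) : f i ≤ ⨆ i, f i :=
  le_ciSup (aux_bdd f) i

lemma aux_iSup_fin0 {ι : Type*} [IsEmpty ι] (f : ι → ℝ) : (⨆ i, f i) = 0 := by
  rw [iSup, Set.range_eq_empty, Real.sSup_empty]

lemma aux_iSup_split {n : ℕ} (f : Fin (n+1) → ℝ) (h0 : ∀ i, 0 ≤ f i) (j : Fin (n+1)) :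
    (⨆ i, f i) = max (f j) (⨆ k, f (j.succAbove k)) := by
  apply le_antisymm
  · refine Real.iSup_le (fun i => ?_) (le_max_of_le_left (h0 j))
    rcases eq_or_ne i j with rfl | hij
    · exact le_max_left _ _
    · obtain ⟨k, rfl⟩ := Fin.exists_succAbove_eq hij
      exact le_max_of_le_right (aux_le_iSup (fun k => f (j.succAbove k)) k)
  · exact max_le (aux_le_iSup f j)
      (Real.iSup_le (fun k => aux_le_iSup f _) (Real.iSup_nonneg fun i => h0 i))

lemma aux_iSup_single {n : ℕ} {s : Fin n → ℝ} (hs : ∀ j, 0 < s j) (x : Fin n → K)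
    (j : Fin n) (hx : ∀ l, l ≠ j → x l = 0) :
    (⨆ l, s l * ‖x l‖) = s j * ‖x j‖ := by
  apply le_antisymm
  · refine Real.iSup_le (fun l => ?_) (mul_nonneg (hs j).le (norm_nonneg _))
    rcases eq_or_ne l j with rfl | h
    · exact le_rfl
    · rw [hx l h, norm_zero, mul_zero]
      exact mul_nonneg (hs j).le (norm_nonneg _)
  · exact aux_le_iSup (fun l => s l * ‖x l‖) j

lemma aux_iSup_zero {ι : Type*} [Finite ι] (s : ι → ℝ) :
    (⨆ l, s l * ‖(0:K)‖) = 0 := by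
  simp only [norm_zero, mul_zero]
  exact le_antisymm (Real.iSup_nonpos fun _ => le_rfl) (Real.iSup_nonneg fun _ => le_rfl)

variable {V : Type*} [NormedAddCommGroup V]

/-- The weighted max norm on `(Fin m → K) × V`. -/
noncomputable def NNaux {m : ℕ} (t : Fin m → ℝ) (v : (Fin m → K) × V) : ℝ :=
  max (⨆ i, t i * ‖v.1 i‖) ‖v.2‖

lemma NNaux_nonneg {m : ℕ} (t : Fin m → ℝ) (v : (Fin m → K) × V) : 0 ≤ NNaux t v :=
  le_max_of_le_right (norm_nonneg _)

lemma iSup_le_NNaux {m : ℕ} (t : Fin m → ℝ) (v : (Fin m → K) × V) :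
    (⨆ i, t i * ‖v.1 i‖) ≤ NNaux t v := le_max_left _ _

lemma coord_le_NNaux {m : ℕ} (t : Fin m → ℝ) (v : (Fin m → K) × V) (i : Fin m) :
    t i * ‖v.1 i‖ ≤ NNaux t v :=
  le_max_of_le_left (aux_le_iSup (fun i => t i * ‖v.1 i‖) i)

lemma snd_le_NNaux {m : ℕ} (t : Fin m → ℝ) (v : (Fin m → K) × V) :
    ‖v.2‖ ≤ NNaux t v := le_max_right _ _

lemma NNaux_fin0 (t : Fin 0 → ℝ) (v : (Fin 0 → K) × V) : NNaux t v = ‖v.2‖ := by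
  rw [NNaux, aux_iSup_fin0]
  exact max_eq_right (norm_nonneg _)

variable [NormedSpace K V]

lemma NNaux_smul_e1 {m : ℕ} (t : Fin (m+1) → ℝ) (ht : ∀ i, 0 < t i) (a : K) :
    NNaux t (a • ((Pi.single 0 1 : Fin (m+1) → K), (0:V))) = t 0 * ‖a‖ := by
  have h1 : ∀ l : Fin (m+1), l ≠ 0 → (a • (Pi.single 0 1 : Fin (m+1) → K)) l = 0 := by
    intro l hl
    simp [Pi.single_eq_of_ne hl]
  rw [NNaux]
  simp only [Prod.smul_fst, Prod.smul_snd, smul_zero, norm_zero]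
  rw [max_eq_left (Real.iSup_nonneg fun l => mul_nonneg (ht l).le (norm_nonneg _))]
  rw [aux_iSup_single ht _ 0 h1]
  simp [Pi.single_eq_same]

/-- Orthogonality of the first coordinate axis, computed explicitly. -/
lemma aux_O2 {m : ℕ} (t : Fin (m+1) → ℝ) (ht : ∀ i, 0 < t i)
    (u : (Fin (m+1) → K) × V) (hu : u.1 0 = 0) (a : K) :
    NNaux t (u + a • ((Pi.single 0 1 : Fin (m+1) → K), (0:V)))
      = max (NNaux t u) (t 0 * ‖a‖) := by
  have key : (⨆ i, t i * ‖(u.1 + a • (Pi.single 0 1 : Fin (m+1) → K)) i‖)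
      = max (t 0 * ‖a‖) (⨆ k : Fin m, t k.succ * ‖u.1 k.succ‖) := by
    rw [aux_iSup_split _ (fun i => mul_nonneg (ht i).le (norm_nonneg _)) 0]
    simp only [Fin.succAbove_zero]
    congr 1
    · simp [hu, Pi.single_eq_same]
    · exact iSup_congr fun k => by
        simp [Pi.single_eq_of_ne (Fin.succ_ne_zero k)]
  have key2 : (⨆ i, t i * ‖u.1 i‖) = ⨆ k : Fin m, t k.succ * ‖u.1 k.succ‖ := by
    rw [aux_iSup_split _ (fun i => mul_nonneg (ht i).le (norm_nonneg _)) 0, hu]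
    rw [norm_zero, mul_zero]
    rw [max_eq_right (Real.iSup_nonneg fun k => mul_nonneg (ht _).le (norm_nonneg _))]
    simp only [Fin.succAbove_zero]
  have hsnd : (u + a • ((Pi.single 0 1 : Fin (m+1) → K), (0:V))).2 = u.2 := by simp
  have hfst : (u + a • ((Pi.single 0 1 : Fin (m+1) → K), (0:V))).1
      = u.1 + a • (Pi.single 0 1 : Fin (m+1) → K) := rfl
  rw [NNaux, NNaux, hsnd, hfst, key, key2, max_assoc]
  exact max_comm _ _

end AuxHelpers

section Strip

variable {K : Type*} [NontriviallyNormedField K]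

lemma NNaux_e1 {V : Type*} [NormedAddCommGroup V] [NormedSpace K V]
    {m : ℕ} (t : Fin (m+1) → ℝ) (ht : ∀ i, 0 < t i) :
    NNaux t ((Pi.single 0 1 : Fin (m+1) → K), (0:V)) = t 0 := by
  have := NNaux_smul_e1 (V := V) t ht (1:K)
  rw [one_smul] at this
  rw [this]
  simp

lemma NNaux_emb {V : Type*} [NormedAddCommGroup V] [NormedSpace K V]
    {m : ℕ} (t : Fin (m+1) → ℝ) (ht : ∀ i, 0 < t i) (v : (Fin m → K) × V) :
    NNaux t ((Fin.cons 0 v.1 : Fin (m+1) → K), v.2) = NNaux (fun i => t i.succ) v := by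
  rw [NNaux, NNaux]
  congr 1
  rw [aux_iSup_split _ (fun i => mul_nonneg (ht i).le (norm_nonneg _)) 0]
  simp only [Fin.succAbove_zero, Fin.cons_zero, Fin.cons_succ, norm_zero, mul_zero]
  exact max_eq_right (Real.iSup_nonneg fun k => mul_nonneg (ht _).le (norm_nonneg _))

lemma aux_cons_eta {M : Type*} [Zero M] {m : ℕ} (x : Fin (m+1) → M) (hx : x 0 = 0) :
    (Fin.cons 0 (fun i : Fin m => x i.succ) : Fin (m+1) → M) = x := by
  funext l
  refine Fin.cases ?_ (fun i => ?_) l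
  · rw [Fin.cons_zero, hx]
  · rw [Fin.cons_succ]

lemma aux_ins_eta {M : Type*} [Zero M] {n : ℕ} (j : Fin (n+1)) (x : Fin (n+1) → M)
    (hx : x j = 0) :
    (Fin.insertNth j 0 (fun k => x (j.succAbove k)) : Fin (n+1) → M) = x := by
  rw [← hx]
  exact Fin.insertNth_self_removeNth j x

lemma aux_strip {V W : Type*} [NormedAddCommGroup V] [NormedSpace K V]
    [NormedAddCommGroup W] [NormedSpace K W]
    {m n : ℕ} (t : Fin (m+1) → ℝ) (s : Fin (n+1) → ℝ)
    (ht : ∀ i, 0 < t i) (hs : ∀ j, 0 < s j)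
    (T : ((Fin (m+1) → K) × V) ≃ₗ[K] ((Fin (n+1) → K) × W))
    (hT : ∀ v, NNaux s (T v) = NNaux t v)
    (j : Fin (n+1))
    (hj : s j * ‖(T ((Pi.single 0 1 : Fin (m+1) → K), (0:V))).1 j‖ = t 0) :
    ∃ T' : ((Fin m → K) × V) ≃ₗ[K] ((Fin n → K) × W),
      ∀ v, NNaux (fun k => s (j.succAbove k)) (T' v) = NNaux (fun i => t i.succ) v := by
  classical
  set e1 : (Fin (m+1) → K) × V := ((Pi.single 0 1 : Fin (m+1) → K), (0:V)) with he1
  have he10 : e1.1 0 = 1 := by simp [he1]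
  set Y : ((Fin (n+1) → K) × W) := T e1 with hY
  have hyj : Y.1 j ≠ 0 := by
    intro h
    rw [h, norm_zero, mul_zero] at hj
    exact absurd hj.symm (ht 0).ne'
  -- the coefficient functional
  set lam : ((Fin (m+1) → K) × V) → K := fun u => (T u).1 j * (Y.1 j)⁻¹ with hlam
  have lam_spec : ∀ u, lam u * Y.1 j = (T u).1 j := by
    intro u
    simp only [hlam]
    exact inv_mul_cancel_right₀ hyj _
  have lam_bound : ∀ u, t 0 * ‖lam u‖ ≤ NNaux t u := by
    intro u
    have h1 : t 0 * ‖lam u‖ = s j * ‖(T u).1 j‖ := by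
      simp only [hlam]
      rw [norm_mul, norm_inv, ← hj]
      have : ‖(T e1).1 j‖ ≠ 0 := by rwa [norm_ne_zero_iff, ← hY]
      field_simp
    rw [h1, ← hT u]
    exact coord_le_NNaux s (T u) j
  set phi : ((Fin (m+1) → K) × V) → ((Fin (m+1) → K) × V) := fun u => u - lam u • e1
    with hphi
  have hTphi : ∀ u, T (phi u) = T u - lam u • Y := by
    intro u
    simp only [hphi]
    simp only [map_sub, map_smul, hY]
  have hTphi1j : ∀ u, (T (phi u)).1 j = 0 := by
    intro u
    rw [hTphi u]
    have : (T u - lam u • Y).1 j = (T u).1 j - lam u * Y.1 j := rfl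
    rw [this, lam_spec, sub_self]
  have phi_iso : ∀ u, u.1 0 = 0 → NNaux t (phi u) = NNaux t u := by
    intro u hu
    have h2 : phi u = u + (-(lam u)) • e1 := by
      simp only [hphi]
      simp [sub_eq_add_neg, neg_smul]
    rw [h2, aux_O2 t ht u hu, norm_neg]
    exact max_eq_left (lam_bound u)
  -- linearity of lam
  have lam_add : ∀ u u', lam (u + u') = lam u + lam u' := by
    intro u u'
    simp only [hlam]
    simp only [map_add]
    have : (T u + T u').1 j = (T u).1 j + (T u').1 j := rfl
    rw [this, add_mul]
  have lam_smul : ∀ (a : K) u, lam (a • u) = a * lam u := by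
    intro a u
    simp only [hlam]
    simp only [map_smul]
    have : ((a • T u)).1 j = a * (T u).1 j := rfl
    rw [this, mul_assoc]
  have phi_add : ∀ u u', phi (u + u') = phi u + phi u' := by
    intro u u'
    simp only [hphi]
    simp only [lam_add, add_smul]
    abel
  have phi_smul : ∀ (a : K) u, phi (a • u) = a • phi u := by
    intro a u
    simp only [hphi]
    simp only [lam_smul, mul_smul, smul_sub]
  -- embedding
  set emb : ((Fin m → K) × V) → ((Fin (m+1) → K) × V) :=
    fun v => ((Fin.cons 0 v.1 : Fin (m+1) → K), v.2) with hemb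
  have emb0 : ∀ v, (emb v).1 0 = 0 := by
    intro v; simp only [hemb]; simp
  have emb_add : ∀ v v', emb (v + v') = emb v + emb v' := by
    intro v v'
    simp only [hemb]
    refine Prod.ext ?_ rfl
    funext l
    refine Fin.cases ?_ (fun i => ?_) l <;> simp
  have emb_smul : ∀ (a : K) v, emb (a • v) = a • emb v := by
    intro a v
    simp only [hemb]
    refine Prod.ext ?_ rfl
    funext l
    refine Fin.cases ?_ (fun i => ?_) l <;> simp
  -- forward and backward maps
  set fwd : ((Fin m → K) × V) → ((Fin n → K) × W) :=
    fun v => ((fun k => (T (phi (emb v))).1 (j.succAbove k)), (T (phi (emb v))).2)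
    with hfwd
  set q : ((Fin n → K) × W) → ((Fin (m+1) → K) × V) :=
    fun z => T.symm ((Fin.insertNth j 0 z.1 : Fin (n+1) → K), z.2) with hq
  set bwd : ((Fin n → K) × W) → ((Fin m → K) × V) :=
    fun z => ((fun i => (q z - (q z).1 0 • e1).1 i.succ), (q z - (q z).1 0 • e1).2)
    with hbwd
  have left_inv : ∀ v, bwd (fwd v) = v := by
    intro v
    have hQj : (T (phi (emb v))).1 j = 0 := hTphi1j (emb v)
    have h1 : ((Fin.insertNth j 0 (fun k => (T (phi (emb v))).1 (j.succAbove k))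
        : Fin (n+1) → K), (T (phi (emb v))).2) = T (phi (emb v)) := by
      refine Prod.ext ?_ rfl
      exact aux_ins_eta j _ hQj
    have hq1 : q (fwd v) = phi (emb v) := by
      simp only [hq, hfwd]
      rw [h1, LinearEquiv.symm_apply_apply]
    have hp0 : (phi (emb v)).1 0 = -(lam (emb v)) := by
      simp only [hphi]
      have : (emb v - lam (emb v) • e1).1 0 = (emb v).1 0 - lam (emb v) * e1.1 0 := rfl
      rw [this, emb0 v, he10, mul_one, zero_sub]
    have hp : phi (emb v) - (phi (emb v)).1 0 • e1 = emb v := by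
      rw [hp0, hphi]
      simp only [neg_smul, sub_neg_eq_add]
      abel
    simp only [hbwd, hq1, hp]
    simp only [hemb]
    refine Prod.ext ?_ rfl
    funext i
    simp
  have right_inv : ∀ z, fwd (bwd z) = z := by
    intro z
    have hq0 : (T (q z)).1 j = 0 := by
      simp only [hq]
      rw [LinearEquiv.apply_symm_apply]
      exact Fin.insertNth_apply_same (α := fun _ => K) j 0 _
    have hlamq : lam (q z) = 0 := by
      simp only [hlam]; rw [ hq0, zero_mul]
    have hpz : (q z - (q z).1 0 • e1).1 0 = 0 := by
      have h9 : (q z - (q z).1 0 • e1).1 0 = (q z).1 0 - (q z).1 0 * e1.1 0 := rfl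
      rw [h9, he10, mul_one, sub_self]
    have hembbwd : emb (bwd z) = q z - (q z).1 0 • e1 := by
      simp only [hemb, hbwd]
      refine Prod.ext ?_ rfl
      exact aux_cons_eta _ hpz
    have hlam2 : lam (q z - (q z).1 0 • e1) = -((q z).1 0) := by
      have h3 : T (q z - (q z).1 0 • e1) = T (q z) - (q z).1 0 • T e1 := by
        simp only [map_sub, map_smul]
      simp only [hlam]
      have h4 : (T (q z) - (q z).1 0 • T e1).1 j
          = (T (q z)).1 j - (q z).1 0 * (T e1).1 j := rfl
      rw [h3, h4, hq0, zero_sub, ← hY, neg_mul]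
      rw [neg_eq_iff_eq_neg, neg_neg]
      exact (mul_inv_cancel_right₀ hyj _)
    have hphiv : phi (emb (bwd z)) = q z := by
      rw [hembbwd]
      simp only [hphi]
      simp only [hlam2, neg_smul, sub_neg_eq_add]
      abel
    simp only [hfwd]
    simp only [hphiv]
    simp only [hq]
    rw [LinearEquiv.apply_symm_apply]
    refine Prod.ext ?_ rfl
    funext k
    exact Fin.insertNth_apply_succAbove (α := fun _ => K) j 0 _ k
  refine ⟨⟨⟨⟨fwd, ?_⟩, ?_⟩, bwd, left_inv, right_inv⟩, ?_⟩
  · intro v v'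
    simp only [hfwd]
    simp only [emb_add, phi_add, map_add]
    rfl
  · intro a v
    simp only [hfwd]
    simp only [emb_smul, phi_smul, map_smul]
    rfl
  · intro v
    have hQj : (T (phi (emb v))).1 j = 0 := hTphi1j (emb v)
    show NNaux (fun k => s (j.succAbove k)) (fwd v) = NNaux (fun i => t i.succ) v
    have h5 : NNaux (fun k => s (j.succAbove k)) (fwd v) = NNaux s (T (phi (emb v))) := by
      rw [NNaux, NNaux]
      congr 1
      rw [aux_iSup_split (fun l => s l * ‖(T (phi (emb v))).1 l‖)
        (fun l => mul_nonneg (hs l).le (norm_nonneg _)) j]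
      rw [hQj, norm_zero, mul_zero]
      exact (max_eq_right (Real.iSup_nonneg fun k => mul_nonneg (hs _).le (norm_nonneg _))).symm
    rw [h5, hT, phi_iso _ (emb0 v)]
    simp only [hemb]
    exact NNaux_emb t ht v
end Strip


section Chunk3

variable {K : Type*} [NontriviallyNormedField K]

lemma aux_exists_eq_iSup {n : ℕ} (f : Fin (n+1) → ℝ) : ∃ j, (⨆ i, f i) = f j := by
  obtain ⟨j, hj⟩ := Finite.exists_max f
  exact ⟨j, le_antisymm (ciSup_le hj) (aux_le_iSup f j)⟩

/-- drop a trivial second factor -/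
noncomputable def auxDropW {M W : Type*} [AddCommGroup M] [Module K M]
    [AddCommGroup W] [Module K W] (hsub : ∀ g : W, g = 0) :
    (M × W) ≃ₗ[K] M where
  toFun := Prod.fst
  map_add' := fun _ _ => rfl
  map_smul' := fun _ _ => rfl
  invFun := fun x => (x, 0)
  left_inv := fun p => Prod.ext rfl (hsub p.2).symm
  right_inv := fun _ => rfl

/-- drop a trivial `Fin 0 → K` first factor -/
noncomputable def auxDrop0 {V : Type*} [AddCommGroup V] [Module K V] :
    ((Fin 0 → K) × V) ≃ₗ[K] V where
  toFun := Prod.snd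
  map_add' := fun _ _ => rfl
  map_smul' := fun _ _ => rfl
  invFun := fun f => (0, f)
  left_inv := fun p => Prod.ext (funext fun i => i.elim0) rfl
  right_inv := fun _ => rfl

lemma aux_iSup_disjoint {b : ℕ} (s : Fin (b+1) → ℝ) (hs : ∀ j, 0 < s j)
    (A B : Fin (b+1) → K) (hA : ∀ l, l ≠ 0 → A l = 0) (hB : B 0 = 0) :
    (⨆ k, s k * ‖A k + B k‖) = max (⨆ k, s k * ‖A k‖) (⨆ k, s k * ‖B k‖) := by
  apply le_antisymm
  · refine Real.iSup_le (fun k => ?_)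
      (le_max_of_le_left (Real.iSup_nonneg fun k => mul_nonneg (hs k).le (norm_nonneg _)))
    rcases eq_or_ne k 0 with rfl | hk
    · rw [hB, add_zero]
      exact le_max_of_le_left (aux_le_iSup (fun k => s k * ‖A k‖) 0)
    · rw [hA k hk, zero_add]
      exact le_max_of_le_right (aux_le_iSup (fun k => s k * ‖B k‖) k)
  · refine max_le (Real.iSup_le (fun k => ?_) ?_) (Real.iSup_le (fun k => ?_) ?_)
    · rcases eq_or_ne k 0 with rfl | hk
      · have h1 : A 0 = A 0 + B 0 := by rw [hB, add_zero]
        rw [h1]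
        exact aux_le_iSup (fun k => s k * ‖A k + B k‖) 0
      · rw [hA k hk, norm_zero, mul_zero]
        exact Real.iSup_nonneg fun k => mul_nonneg (hs k).le (norm_nonneg _)
    · exact Real.iSup_nonneg fun k => mul_nonneg (hs k).le (norm_nonneg _)
    · rcases eq_or_ne k 0 with rfl | hk
      · rw [hB, norm_zero, mul_zero]
        exact Real.iSup_nonneg fun k => mul_nonneg (hs k).le (norm_nonneg _)
      · have h1 : B k = A k + B k := by rw [hA k hk, zero_add]
        rw [h1]
        exact aux_le_iSup (fun k => s k * ‖A k + B k‖) k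
    · exact Real.iSup_nonneg fun k => mul_nonneg (hs k).le (norm_nonneg _)

lemma aux_reassemble {m n : ℕ}
    (t : Fin (m+1) → ℝ) (s : Fin (n+1) → ℝ) (ht : ∀ i, 0 < t i) (hs : ∀ j, 0 < s j)
    (j : Fin (n+1)) (lam : K) (hlam : s j * ‖lam‖ = t 0)
    (T₀' : (Fin m → K) ≃ₗ[K] (Fin n → K))
    (h : ∀ x, (⨆ k, s (j.succAbove k) * ‖T₀' x k‖) = ⨆ i, t i.succ * ‖x i‖) :
    ∃ T₀ : (Fin (m+1) → K) ≃ₗ[K] (Fin (n+1) → K),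
      ∀ x, (⨆ l, s l * ‖T₀ x l‖) = ⨆ i, t i * ‖x i‖ := by
  classical
  have hlam0 : lam ≠ 0 := by
    intro h0
    rw [h0, norm_zero, mul_zero] at hlam
    exact absurd hlam.symm (ht 0).ne'
  set fwd : (Fin (m+1) → K) → (Fin (n+1) → K) :=
    fun x => Fin.insertNth j (lam * x 0) (T₀' (fun i : Fin m => x i.succ)) with hfwd
  set bwd : (Fin (n+1) → K) → (Fin (m+1) → K) :=
    fun x' => Fin.cons (lam⁻¹ * x' j) (T₀'.symm (fun k => x' (j.succAbove k))) with hbwd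
  have left_inv : ∀ x, bwd (fwd x) = x := by
    intro x
    simp only [hbwd, hfwd]
    rw [Fin.insertNth_apply_same]
    have h2 : (fun k => Fin.insertNth (α := fun _ => K) j (lam * x 0)
        (T₀' (fun i : Fin m => x i.succ)) (j.succAbove k)) = T₀' (fun i : Fin m => x i.succ) := by
      funext k
      exact Fin.insertNth_apply_succAbove (α := fun _ => K) j _ _ k
    rw [h2, LinearEquiv.symm_apply_apply, inv_mul_cancel_left₀ hlam0]
    funext l
    refine Fin.cases ?_ (fun i => ?_) l
    · rw [Fin.cons_zero]
    · rw [Fin.cons_succ]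
  have right_inv : ∀ x', fwd (bwd x') = x' := by
    intro x'
    simp only [hbwd, hfwd]
    rw [Fin.cons_zero, mul_inv_cancel_left₀ hlam0]
    have h2 : (fun i => (Fin.cons (α := fun _ => K) (lam⁻¹ * x' j)
        (T₀'.symm (fun k => x' (j.succAbove k)))) i.succ)
        = T₀'.symm (fun k => x' (j.succAbove k)) := by
      funext i
      rw [Fin.cons_succ]
    rw [h2, LinearEquiv.apply_symm_apply]
    exact Fin.insertNth_self_removeNth j x'
  have fwd_add : ∀ x y, fwd (x + y) = fwd x + fwd y := by
    intro x y
    simp only [hfwd]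
    funext l
    rcases eq_or_ne l j with rfl | hl
    · simp only [Pi.add_apply, Fin.insertNth_apply_same, mul_add]
    · obtain ⟨k, rfl⟩ := Fin.exists_succAbove_eq hl
      simp only [Pi.add_apply, Fin.insertNth_apply_succAbove]
      have h3 : (fun i : Fin m => x i.succ + y i.succ)
          = (fun i : Fin m => x i.succ) + fun i : Fin m => y i.succ := rfl
      rw [h3, map_add]
      rfl
  have fwd_smul : ∀ (a : K) x, fwd (a • x) = a • fwd x := by
    intro a x
    simp only [hfwd]
    funext l
    rcases eq_or_ne l j with rfl | hl
    · simp only [Pi.smul_apply, Fin.insertNth_apply_same, smul_eq_mul]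
      ring
    · obtain ⟨k, rfl⟩ := Fin.exists_succAbove_eq hl
      simp only [Pi.smul_apply, Fin.insertNth_apply_succAbove]
      have h3 : (fun i : Fin m => a • x i.succ) = a • fun i : Fin m => x i.succ := rfl
      rw [h3, map_smul]
      rfl
  refine ⟨⟨⟨⟨fwd, fwd_add⟩, fwd_smul⟩, bwd, left_inv, right_inv⟩, ?_⟩
  intro x
  show (⨆ l, s l * ‖fwd x l‖) = ⨆ i, t i * ‖x i‖
  rw [aux_iSup_split (fun l => s l * ‖fwd x l‖)
    (fun l => mul_nonneg (hs l).le (norm_nonneg _)) j]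
  have h4 : fwd x j = lam * x 0 := by
    simp only [hfwd]; exact Fin.insertNth_apply_same j _ _
  have h5 : ∀ k, fwd x (j.succAbove k) = T₀' (fun i : Fin m => x i.succ) k := by
    intro k
    simp only [hfwd]; exact Fin.insertNth_apply_succAbove (α := fun _ => K) j _ _ k
  have h6 : (⨆ k, s (j.succAbove k) * ‖fwd x (j.succAbove k)‖)
      = ⨆ i : Fin m, t i.succ * ‖x i.succ‖ := by
    have := h (fun i : Fin m => x i.succ)
    rw [← this]
    exact iSup_congr fun k => by rw [h5 k]
  rw [h6, h4, norm_mul, ← mul_assoc, hlam]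
  rw [aux_iSup_split (fun i => t i * ‖x i‖)
    (fun i => mul_nonneg (ht i).le (norm_nonneg _)) 0]
  simp only [Fin.succAbove_zero]

end Chunk3

section Chunk4

variable {K F : Type*} [NontriviallyNormedField K]
  [NormedAddCommGroup F] [NormedSpace K F]

lemma aux_lemB (hF : Indecomposable' K F) (hF2 : 2 ≤ Module.finrank K F) :
    ∀ (a : ℕ) {W : Type*} [NormedAddCommGroup W] [NormedSpace K W],
      (∀ g : W, g = 0) →
      ∀ (b : ℕ) (t : Fin a → ℝ) (s : Fin b → ℝ), (∀ i, 0 < t i) → (∀ j, 0 < s j) →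
      ∀ T : ((Fin a → K) × F) ≃ₗ[K] ((Fin b → K) × W),
      (∀ v, NNaux s (T v) = NNaux t v) → False := by
  intro a
  induction a with
  | zero =>
    intro W _ _ hsub b t s ht hs T hT
    set SF : F ≃ₗ[K] ((Fin b → K) × W) := (auxDrop0 (K := K)).symm.trans T with hSFdef
    have hSFapp : ∀ f : F, SF f = T (0, f) := fun f => rfl
    have hnorm : ∀ f : F, ‖f‖ = NNaux s (SF f) := by
      intro f
      rw [hSFapp, hT ((0 : Fin 0 → K), f), NNaux_fin0]
    have hsnd : ∀ f : F, (SF f).2 = 0 := fun f => hsub _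
    have hnormf : ∀ f : F, ‖f‖ = ⨆ k, s k * ‖(SF f).1 k‖ := by
      intro f
      rw [hnorm f, NNaux, hsnd, norm_zero]
      exact max_eq_left (Real.iSup_nonneg fun k => mul_nonneg (hs k).le (norm_nonneg _))
    have hrank : Module.finrank K F = b := by
      have h1 := (SF.trans (auxDropW (K := K) hsub)).finrank_eq
      rwa [Module.finrank_fin_fun] at h1
    rcases b with _ | _ | b
    · omega
    · omega
    · apply hF
      set A : F →ₗ[K] (Fin (b+2) → K) :=
        (LinearMap.fst K (Fin (b+2) → K) W).comp SF.toLinearMap with hA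
      have hAapp : ∀ f, A f = (SF f).1 := fun f => rfl
      have hnormA : ∀ f : F, ‖f‖ = ⨆ k, s k * ‖A f k‖ := by
        intro f
        rw [hnormf f]
        exact iSup_congr fun k => by rw [hAapp]
      set L1 : F →ₗ[K] (Fin (b+1) → K) := (LinearMap.funLeft K K Fin.succ).comp A with hL1
      set L2 : F →ₗ[K] K := (LinearMap.proj 0).comp A with hL2
      have memD1 : ∀ f, f ∈ LinearMap.ker L1 ↔ ∀ l, l ≠ 0 → A f l = 0 := by
        intro f
        constructor
        · intro hf l hl
          rcases Fin.eq_zero_or_eq_succ l with rfl | ⟨k, rfl⟩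
          · exact absurd rfl hl
          · exact congrFun (LinearMap.mem_ker.mp hf) k
        · intro hf
          rw [LinearMap.mem_ker]
          funext k
          exact hf _ (Fin.succ_ne_zero k)
      have memD2 : ∀ f, f ∈ LinearMap.ker L2 ↔ A f 0 = 0 := by
        intro f
        rw [LinearMap.mem_ker]
        exact Iff.rfl
      have hAsymm : ∀ x : Fin (b+2) → K, A (SF.symm (x, 0)) = x := by
        intro x
        rw [hAapp, LinearEquiv.apply_symm_apply]
      have hnz : ∀ (x : Fin (b+2) → K) (l : Fin (b+2)), x l ≠ 0 → SF.symm (x, 0) ≠ 0 := by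
        intro x l hx h0
        have h2 := hAsymm x
        rw [h0, map_zero] at h2
        exact hx (congrFun h2 l).symm
      refine ⟨LinearMap.ker L1, LinearMap.ker L2, ?_, ?_, ?_, ?_⟩
      · refine Submodule.ne_bot_iff _ |>.mpr ⟨SF.symm (Pi.single 0 1, 0), ?_, ?_⟩
        · refine (memD1 _).mpr fun l hl => ?_
          rw [hAsymm]
          exact Pi.single_eq_of_ne hl 1
        · refine hnz _ 0 ?_
          rw [Pi.single_eq_same]
          exact one_ne_zero
      · refine Submodule.ne_bot_iff _ |>.mpr ⟨SF.symm (Pi.single 1 1, 0), ?_, ?_⟩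
        · refine (memD2 _).mpr ?_
          rw [hAsymm]
          exact Pi.single_eq_of_ne (Fin.zero_ne_one) 1
        · refine hnz _ 1 ?_
          rw [Pi.single_eq_same]
          exact one_ne_zero
      · rw [eq_top_iff]
        rintro f -
        refine Submodule.mem_sup.mpr ⟨SF.symm (Pi.single 0 (A f 0), 0), ?_,
          f - SF.symm (Pi.single 0 (A f 0), 0), ?_, by abel⟩
        · refine (memD1 _).mpr fun l hl => ?_
          rw [hAsymm]
          exact Pi.single_eq_of_ne hl _
        · refine (memD2 _).mpr ?_
          rw [map_sub]
          have h3 : (A (SF.symm (Pi.single 0 (A f 0), 0)) : Fin (b+2) → K) 0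
              = A f 0 := by
            rw [hAsymm, Pi.single_eq_same]
          have h4 : (A f - A (SF.symm (Pi.single 0 (A f 0), 0))) 0
              = A f 0 - A (SF.symm (Pi.single 0 (A f 0), 0)) 0 := rfl
          rw [h4, h3, sub_self]
      · intro v₁ h₁ v₂ h₂
        rw [hnormA (v₁ + v₂), hnormA v₁, hnormA v₂]
        rw [show (⨆ k, s k * ‖A (v₁ + v₂) k‖) = ⨆ k, s k * ‖A v₁ k + A v₂ k‖ from
          iSup_congr fun k => by rw [map_add]; rfl]
        exact aux_iSup_disjoint s hs (A v₁) (A v₂) ((memD1 v₁).mp h₁) ((memD2 v₂).mp h₂)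
  | succ a ih =>
    intro W _ _ hsub b t s ht hs T hT
    rcases b with _ | b
    · have h1 := hT ((Pi.single 0 1 : Fin (a+1) → K), (0:F))
      rw [NNaux_e1 t ht] at h1
      have h2 : NNaux s (T (Pi.single 0 1, 0)) = 0 := by
        rw [NNaux, aux_iSup_fin0, hsub ((T (Pi.single 0 1, (0:F))).2), norm_zero, max_self]
      rw [h2] at h1
      exact (ht 0).ne' h1.symm
    · have he := hT ((Pi.single 0 1 : Fin (a+1) → K), (0:F))
      rw [NNaux_e1 t ht] at he
      have hsup : (⨆ j, s j * ‖(T (Pi.single 0 1, (0:F))).1 j‖) = t 0 := by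
        rw [NNaux, hsub ((T (Pi.single 0 1, (0:F))).2), norm_zero] at he
        rw [← he]
        exact (max_eq_left (Real.iSup_nonneg fun k =>
          mul_nonneg (hs k).le (norm_nonneg _))).symm
      obtain ⟨j, hj⟩ := aux_exists_eq_iSup (fun j => s j * ‖(T (Pi.single 0 1, (0:F))).1 j‖)
      have hj' : s j * ‖(T (Pi.single 0 1, (0:F))).1 j‖ = t 0 := by rw [← hj, hsup]
      obtain ⟨T', hT'⟩ := aux_strip t s ht hs T hT j hj'
      exact ih hsub b _ _ (fun i => ht i.succ) (fun k => hs (j.succAbove k)) T' hT'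

end Chunk4

section Chunk5

variable {K : Type*} [NontriviallyNormedField K]

lemma aux_stripG {V W : Type*} [NormedAddCommGroup V] [NormedSpace K V]
    [NormedAddCommGroup W] [NormedSpace K W]
    {m n : ℕ} (t : Fin (m+1) → ℝ) (s : Fin n → ℝ)
    (ht : ∀ i, 0 < t i) (hs : ∀ j, 0 < s j)
    (T : ((Fin (m+1) → K) × V) ≃ₗ[K] ((Fin n → K) × W))
    (hT : ∀ v, NNaux s (T v) = NNaux t v)
    (hw : ‖(T ((Pi.single 0 1 : Fin (m+1) → K), (0:V))).2‖ = t 0)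
    (hspan : ∀ g : W, ∃ μ : K, g = μ • (T ((Pi.single 0 1 : Fin (m+1) → K), (0:V))).2) :
    ∃ T' : ((Fin m → K) × V) ≃ₗ[K] ((Fin n → K) × (Fin 0 → K)),
      ∀ v, NNaux s (T' v) = NNaux (fun i => t i.succ) v := by
  classical
  set e1 : (Fin (m+1) → K) × V := ((Pi.single 0 1 : Fin (m+1) → K), (0:V)) with he1
  have he10 : e1.1 0 = 1 := by simp [he1]
  set w : W := (T e1).2 with hwdef
  have hw0 : w ≠ 0 := by
    intro h
    rw [h, norm_zero] at hw
    exact (ht 0).ne' hw.symm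
  have smul_cancel : ∀ (a b : K), a • w = b • w → a = b := by
    intro a b hab
    by_contra hne
    have h1 : (a - b) • w = 0 := by rw [sub_smul, hab, sub_self]
    have h2 : w = 0 := by
      have h3 := congrArg (fun z => (a - b)⁻¹ • z) h1
      simpa [smul_smul, inv_mul_cancel₀ (sub_ne_zero.mpr hne)] using h3
    exact hw0 h2
  set mu : W → K := fun g => Classical.choose (hspan g) with hmu
  have hmu_spec : ∀ g : W, g = mu g • w := by
    intro g
    have := Classical.choose_spec (hspan g)
    rw [hmu]
    exact this
  have mu_unique : ∀ (g : W) (μ : K), g = μ • w → mu g = μ := by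
    intro g μ hg
    exact smul_cancel _ _ ((hmu_spec g).symm.trans hg)
  set lam : ((Fin (m+1) → K) × V) → K := fun u => mu (T u).2 with hlam
  have lam_spec : ∀ u, (T u).2 = lam u • w := by
    intro u
    simp only [hlam]
    exact hmu_spec _
  have lam_bound : ∀ u, t 0 * ‖lam u‖ ≤ NNaux t u := by
    intro u
    have h1 : t 0 * ‖lam u‖ = ‖(T u).2‖ := by
      rw [lam_spec u, norm_smul, ← hw]
      ring
    rw [h1, ← hT u]
    exact snd_le_NNaux s (T u)
  have lam_add : ∀ u u', lam (u + u') = lam u + lam u' := by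
    intro u u'
    have h1 : (T (u + u')).2 = (T u).2 + (T u').2 := by rw [map_add]; rfl
    have h2 : (T (u + u')).2 = (lam u + lam u') • w := by
      rw [h1, add_smul, ← lam_spec u, ← lam_spec u']
    exact mu_unique _ _ h2
  have lam_smul : ∀ (a : K) u, lam (a • u) = a * lam u := by
    intro a u
    have h1 : (T (a • u)).2 = a • (T u).2 := by rw [map_smul]; rfl
    have h2 : (T (a • u)).2 = (a * lam u) • w := by
      rw [h1, lam_spec u, smul_smul]
    exact mu_unique _ _ h2
  set phi : ((Fin (m+1) → K) × V) → ((Fin (m+1) → K) × V) := fun u => u - lam u • e1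
    with hphi
  have hTphi2 : ∀ u, (T (phi u)).2 = 0 := by
    intro u
    simp only [hphi]
    have h1 : T (u - lam u • e1) = T u - lam u • T e1 := by
      simp only [map_sub, map_smul]
    rw [h1]
    have h2 : (T u - lam u • T e1).2 = (T u).2 - lam u • (T e1).2 := rfl
    rw [h2, ← hwdef, ← lam_spec u, sub_self]
  have phi_iso : ∀ u, u.1 0 = 0 → NNaux t (phi u) = NNaux t u := by
    intro u hu
    have h2 : phi u = u + (-(lam u)) • e1 := by
      simp only [hphi]
      simp [sub_eq_add_neg, neg_smul]
    rw [h2, aux_O2 t ht u hu, norm_neg]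
    exact max_eq_left (lam_bound u)
  have phi_add : ∀ u u', phi (u + u') = phi u + phi u' := by
    intro u u'
    simp only [hphi]
    simp only [lam_add, add_smul]
    abel
  have phi_smul : ∀ (a : K) u, phi (a • u) = a • phi u := by
    intro a u
    simp only [hphi]
    simp only [lam_smul, mul_smul, smul_sub]
  set emb : ((Fin m → K) × V) → ((Fin (m+1) → K) × V) :=
    fun v => ((Fin.cons 0 v.1 : Fin (m+1) → K), v.2) with hemb
  have emb0 : ∀ v, (emb v).1 0 = 0 := by
    intro v; simp only [hemb]; simp
  have emb_add : ∀ v v', emb (v + v') = emb v + emb v' := by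
    intro v v'
    simp only [hemb]
    refine Prod.ext ?_ rfl
    funext l
    refine Fin.cases ?_ (fun i => ?_) l <;> simp
  have emb_smul : ∀ (a : K) v, emb (a • v) = a • emb v := by
    intro a v
    simp only [hemb]
    refine Prod.ext ?_ rfl
    funext l
    refine Fin.cases ?_ (fun i => ?_) l <;> simp
  set fwd : ((Fin m → K) × V) → ((Fin n → K) × (Fin 0 → K)) :=
    fun v => ((T (phi (emb v))).1, (0 : Fin 0 → K)) with hfwd
  set q : ((Fin n → K) × (Fin 0 → K)) → ((Fin (m+1) → K) × V) :=
    fun z => T.symm (z.1, (0:W)) with hq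
  set bwd : ((Fin n → K) × (Fin 0 → K)) → ((Fin m → K) × V) :=
    fun z => ((fun i => (q z - (q z).1 0 • e1).1 i.succ), (q z - (q z).1 0 • e1).2)
    with hbwd
  have left_inv : ∀ v, bwd (fwd v) = v := by
    intro v
    have h1 : ((T (phi (emb v))).1, (0:W)) = T (phi (emb v)) := by
      refine Prod.ext rfl ?_
      exact (hTphi2 (emb v)).symm
    have hq1 : q (fwd v) = phi (emb v) := by
      simp only [hq, hfwd]
      rw [h1, LinearEquiv.symm_apply_apply]
    have hp0 : (phi (emb v)).1 0 = -(lam (emb v)) := by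
      simp only [hphi]
      have h5 : (emb v - lam (emb v) • e1).1 0 = (emb v).1 0 - lam (emb v) * e1.1 0 := rfl
      rw [h5, emb0 v, he10, mul_one, zero_sub]
    have hp : phi (emb v) - (phi (emb v)).1 0 • e1 = emb v := by
      rw [hp0]
      simp only [hphi]
      simp only [neg_smul, sub_neg_eq_add]
      abel
    simp only [hbwd, hq1, hp]
    simp only [hemb]
    refine Prod.ext ?_ rfl
    funext i
    simp
  have right_inv : ∀ z, fwd (bwd z) = z := by
    intro z
    have hq0 : (T (q z)).2 = 0 := by
      simp only [hq]
      rw [LinearEquiv.apply_symm_apply]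
    have hpz : (q z - (q z).1 0 • e1).1 0 = 0 := by
      have h9 : (q z - (q z).1 0 • e1).1 0 = (q z).1 0 - (q z).1 0 * e1.1 0 := rfl
      rw [h9, he10, mul_one, sub_self]
    have hembbwd : emb (bwd z) = q z - (q z).1 0 • e1 := by
      simp only [hemb, hbwd]
      refine Prod.ext ?_ rfl
      exact aux_cons_eta _ hpz
    have hlam2 : lam (q z - (q z).1 0 • e1) = -((q z).1 0) := by
      simp only [hlam]
      refine mu_unique _ _ ?_
      have h3 : T (q z - (q z).1 0 • e1) = T (q z) - (q z).1 0 • T e1 := by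
        simp only [map_sub, map_smul]
      have h4 : (T (q z) - (q z).1 0 • T e1).2
          = (T (q z)).2 - (q z).1 0 • (T e1).2 := rfl
      rw [h3, h4, hq0, zero_sub, ← hwdef, neg_smul]
    have hphiv : phi (emb (bwd z)) = q z := by
      rw [hembbwd]
      simp only [hphi]
      simp only [hlam2, neg_smul, sub_neg_eq_add]
      abel
    simp only [hfwd, hphiv, hq]
    rw [LinearEquiv.apply_symm_apply]
    refine Prod.ext rfl ?_
    funext i
    exact i.elim0
  refine ⟨⟨⟨⟨fwd, ?_⟩, ?_⟩, bwd, left_inv, right_inv⟩, ?_⟩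
  · intro v v'
    simp only [hfwd]
    simp only [emb_add, phi_add, map_add]
    refine Prod.ext rfl ?_
    funext i
    exact i.elim0
  · intro a v
    simp only [hfwd]
    simp only [emb_smul, phi_smul, map_smul]
    refine Prod.ext rfl ?_
    funext i
    exact i.elim0
  · intro v
    show NNaux s (fwd v) = NNaux (fun i => t i.succ) v
    have h5 : NNaux s (fwd v) = NNaux s (T (phi (emb v))) := by
      simp only [hfwd]
      rw [NNaux, NNaux]
      have h6 : ‖((T (phi (emb v))).1, (0 : Fin 0 → K)).2‖ = 0 := norm_zero
      have h7 : ‖(T (phi (emb v))).2‖ = 0 := by rw [hTphi2 (emb v), norm_zero]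
      rw [h6, h7]
    rw [h5, hT, phi_iso _ (emb0 v)]
    simp only [hemb]
    exact NNaux_emb t ht v

end Chunk5

section Chunk6

open IsUltrametricDist

lemma aux_main {K F G : Type*} [NontriviallyNormedField K] [IsUltrametricDist K]
    [NormedAddCommGroup F] [NormedSpace K F]
    [NormedAddCommGroup G] [NormedSpace K G] [IsUltrametricDist G]
    (hF : Indecomposable' K F) (hG : Indecomposable' K G)
    (hF2 : 2 ≤ Module.finrank K F) :
    ∀ (m n : ℕ) (t : Fin m → ℝ) (s : Fin n → ℝ), (∀ i, 0 < t i) → (∀ j, 0 < s j) →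
    ∀ T : ((Fin m → K) × F) ≃ₗ[K] ((Fin n → K) × G),
    (∀ v, NNaux s (T v) = NNaux t v) →
    m = n ∧
    (∃ T₀ : (Fin m → K) ≃ₗ[K] (Fin n → K),
      ∀ x : Fin m → K, (⨆ j, s j * ‖T₀ x j‖) = ⨆ i, t i * ‖x i‖) ∧
    (∃ T₁ : F ≃ₗ[K] G, ∀ u : F, ‖T₁ u‖ = ‖u‖) := by
  intro m
  induction m with
  | zero =>
    intro n t s ht hs T hT
    set SF : F ≃ₗ[K] ((Fin n → K) × G) := (auxDrop0 (K := K)).symm.trans T with hSFdef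
    have hSFapp : ∀ f : F, SF f = T (0, f) := fun f => rfl
    have hnorm : ∀ f : F, ‖f‖ = NNaux s (SF f) := by
      intro f
      rw [hSFapp, hT ((0 : Fin 0 → K), f), NNaux_fin0]
    rcases n with _ | n'
    · refine ⟨rfl, ⟨LinearEquiv.refl K (Fin 0 → K), fun x => by
        rw [aux_iSup_fin0, aux_iSup_fin0]⟩,
        ⟨SF.trans (auxDrop0 (K := K)), fun f => ?_⟩⟩
      show ‖(SF f).2‖ = ‖f‖
      rw [hnorm f, NNaux_fin0]
    · exfalso
      set L1 : F →ₗ[K] G := (LinearMap.snd K (Fin (n'+1) → K) G).comp SF.toLinearMap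
        with hL1
      set L2 : F →ₗ[K] (Fin (n'+1) → K) :=
        (LinearMap.fst K (Fin (n'+1) → K) G).comp SF.toLinearMap with hL2
      have memD1 : ∀ f, f ∈ LinearMap.ker L1 ↔ (SF f).2 = 0 := by
        intro f; rw [LinearMap.mem_ker]; exact Iff.rfl
      have memD2 : ∀ f, f ∈ LinearMap.ker L2 ↔ (SF f).1 = 0 := by
        intro f; rw [LinearMap.mem_ker]; exact Iff.rfl
      have hsup2 : ∀ v₂, (SF v₂).1 = 0 → (⨆ i, s i * ‖(SF v₂).1 i‖) = 0 := by
        intro v₂ h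
        refine le_antisymm (Real.iSup_nonpos fun i => ?_)
          (Real.iSup_nonneg fun i => mul_nonneg (hs i).le (norm_nonneg _))
        rw [congrFun h i, Pi.zero_apply, norm_zero, mul_zero]
      have hnormsplit : ∀ v₁ ∈ LinearMap.ker L1, ∀ v₂ ∈ LinearMap.ker L2,
          ‖v₁ + v₂‖ = max ‖v₁‖ ‖v₂‖ := by
        intro v₁ h₁ v₂ h₂
        have e12 : (SF v₁).2 = 0 := (memD1 v₁).mp h₁
        have e21 : (SF v₂).1 = 0 := (memD2 v₂).mp h₂
        rw [hnorm (v₁ + v₂), hnorm v₁, hnorm v₂, NNaux, NNaux, NNaux]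
        have hadd : SF (v₁ + v₂) = SF v₁ + SF v₂ := map_add _ _ _
        rw [hadd]
        have h1 : ∀ i, (SF v₁ + SF v₂).1 i = (SF v₁).1 i := by
          intro i
          have h2 : (SF v₁ + SF v₂).1 i = (SF v₁).1 i + (SF v₂).1 i := rfl
          rw [h2, congrFun e21 i, Pi.zero_apply, add_zero]
        have h2 : (SF v₁ + SF v₂).2 = (SF v₂).2 := by
          have h3 : (SF v₁ + SF v₂).2 = (SF v₁).2 + (SF v₂).2 := rfl
          rw [h3, e12, zero_add]
        have h4 : (⨆ i, s i * ‖(SF v₁ + SF v₂).1 i‖) = ⨆ i, s i * ‖(SF v₁).1 i‖ :=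
          iSup_congr fun i => by rw [h1 i]
        rw [h4, h2, e12, norm_zero, hsup2 v₂ e21]
        rw [max_eq_left (Real.iSup_nonneg fun i => mul_nonneg (hs i).le (norm_nonneg _)),
          max_eq_right (norm_nonneg _)]
      have hbot : LinearMap.ker L1 = ⊥ ∨ LinearMap.ker L2 = ⊥ := by
        by_contra hcon
        push_neg at hcon
        refine hF ⟨LinearMap.ker L1, LinearMap.ker L2, hcon.1, hcon.2, ?_, hnormsplit⟩
        rw [eq_top_iff]
        rintro f -
        refine Submodule.mem_sup.mpr ⟨SF.symm ((SF f).1, 0), ?_,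
          SF.symm (0, (SF f).2), ?_, ?_⟩
        · refine (memD1 _).mpr ?_
          rw [LinearEquiv.apply_symm_apply]
        · refine (memD2 _).mpr ?_
          rw [LinearEquiv.apply_symm_apply]
        · apply SF.injective
          rw [map_add, LinearEquiv.apply_symm_apply, LinearEquiv.apply_symm_apply]
          show ((SF f).1, (0:G)) + ((0: Fin (n'+1) → K), (SF f).2) = SF f
          refine Prod.ext ?_ ?_
          · show (SF f).1 + 0 = (SF f).1
            rw [add_zero]
          · show (0:G) + (SF f).2 = (SF f).2
            rw [zero_add]
      rcases hbot with hD1 | hD2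
      · -- first factor is trivial : contradiction via Pi.single
        have hf := (memD1 (SF.symm (Pi.single 0 1, 0))).mpr (by rw [LinearEquiv.apply_symm_apply])
        rw [hD1, Submodule.mem_bot] at hf
        have h4 := LinearEquiv.apply_symm_apply SF (Pi.single 0 1, 0)
        rw [hf, map_zero] at h4
        have h5 : (1:K) = 0 := by
          have h6 := congrArg (fun p : ((Fin (n'+1) → K) × G) => p.1 0) h4
          simpa using h6.symm
        exact one_ne_zero h5
      · -- G is trivial : lemB contradiction
        have hGz : ∀ g : G, g = 0 := by
          intro g
          have h3 : SF.symm (0, g) ∈ LinearMap.ker L2 :=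
            (memD2 _).mpr (by rw [LinearEquiv.apply_symm_apply])
          rw [hD2, Submodule.mem_bot] at h3
          have h4 := LinearEquiv.apply_symm_apply SF (0, g)
          rw [h3, map_zero] at h4
          exact (congrArg Prod.snd h4).symm
        exact aux_lemB hF hF2 0 hGz (n'+1) t s ht hs T hT
  | succ m ih =>
    intro n t s ht hs T hT
    have hNe1 : NNaux (V := F) t ((Pi.single 0 1 : Fin (m+1) → K), (0:F)) = t 0 :=
      NNaux_e1 t ht
    rcases n with _ | n'
    · exfalso
      set SG : ((Fin (m+1) → K) × F) ≃ₗ[K] G := T.trans (auxDrop0 (K := K)) with hSGdef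
      have hSGapp : ∀ v, SG v = (T v).2 := fun v => rfl
      have hSGnorm : ∀ v, ‖SG v‖ = NNaux t v := by
        intro v
        rw [hSGapp, ← hT v, NNaux_fin0]
      set e1 : (Fin (m+1) → K) × F := ((Pi.single 0 1 : Fin (m+1) → K), (0:F)) with he1
      set L : G →ₗ[K] K := (LinearMap.proj 0).comp
        ((LinearMap.fst K (Fin (m+1) → K) F).comp (SG.symm : G ≃ₗ[K] _).toLinearMap) with hLdef
      have hLapp : ∀ g, L g = (SG.symm g).1 0 := fun g => rfl
      apply hG
      refine ⟨Submodule.span K {SG e1}, LinearMap.ker L, ?_, ?_, ?_, ?_⟩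
      · intro hcon
        rw [Submodule.span_singleton_eq_bot] at hcon
        have h1 : ‖SG e1‖ = t 0 := by rw [hSGnorm, hNe1]
        rw [hcon, norm_zero] at h1
        exact (ht 0).ne' h1.symm
      · have : Nontrivial F := by
          refine Module.nontrivial_of_finrank_pos (R := K) ?_
          omega
        obtain ⟨f, hf⟩ := exists_ne (0 : F)
        refine Submodule.ne_bot_iff _ |>.mpr ⟨SG ((0 : Fin (m+1) → K), f), ?_, ?_⟩
        · rw [LinearMap.mem_ker, hLapp, LinearEquiv.symm_apply_apply]
          rfl
        · intro h
          have h2 : ((0 : Fin (m+1) → K), f) = 0 := by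
            apply SG.injective
            rw [h, map_zero]
          exact hf (congrArg Prod.snd h2)
      · rw [eq_top_iff]
        rintro g -
        refine Submodule.mem_sup.mpr ⟨SG ((SG.symm g).1 0 • e1), ?_,
          SG (SG.symm g - (SG.symm g).1 0 • e1), ?_, ?_⟩
        · exact Submodule.mem_span_singleton.mpr ⟨(SG.symm g).1 0, (map_smul SG _ _).symm⟩
        · rw [LinearMap.mem_ker, hLapp, LinearEquiv.symm_apply_apply]
          have h1 : (SG.symm g - (SG.symm g).1 0 • e1).1 0
              = (SG.symm g).1 0 - (SG.symm g).1 0 * e1.1 0 := rfl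
          rw [h1]
          simp [he1]
        · rw [← map_add]
          have h1 : (SG.symm g).1 0 • e1 + (SG.symm g - (SG.symm g).1 0 • e1) = SG.symm g := by
            abel
          rw [h1, LinearEquiv.apply_symm_apply]
      · intro v₁ h₁ v₂ h₂
        obtain ⟨a, ha⟩ := Submodule.mem_span_singleton.mp h₁
        have hLv2 : (SG.symm v₂).1 0 = 0 := by
          have := LinearMap.mem_ker.mp h₂
          rw [hLapp] at this
          exact this
        have hv1 : v₁ = SG (a • e1) := by rw [map_smul, ha]
        have hv2 : v₂ = SG (SG.symm v₂) := (LinearEquiv.apply_symm_apply SG v₂).symm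
        have hsum : v₁ + v₂ = SG (SG.symm v₂ + a • e1) := by
          rw [map_add, ← hv2, map_smul, ha, add_comm]
        rw [hsum, hSGnorm, aux_O2 t ht _ hLv2 a]
        have hn1 : ‖v₁‖ = t 0 * ‖a‖ := by
          rw [hv1, hSGnorm, he1, NNaux_smul_e1 t ht]
        have hn2 : ‖v₂‖ = NNaux t (SG.symm v₂) := by
          rw [hv2, hSGnorm]
          rw [LinearEquiv.apply_symm_apply]
        rw [hn1, hn2, max_comm]
    · -- n = n' + 1
      by_cases hA : ∃ j, s j * ‖(T ((Pi.single 0 1 : Fin (m+1) → K), (0:F))).1 j‖ = t 0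
      · obtain ⟨j, hj⟩ := hA
        obtain ⟨T', hT'⟩ := aux_strip t s ht hs T hT j hj
        obtain ⟨hmn, ⟨T₀', hT₀'⟩, hT₁⟩ := ih (n') (fun i => t i.succ)
          (fun k => s (j.succAbove k)) (fun i => ht i.succ) (fun k => hs (j.succAbove k)) T' hT'
        refine ⟨by omega, ?_, hT₁⟩
        exact aux_reassemble t s ht hs j _ hj T₀' hT₀'
      · exfalso
        push_neg at hA
        set e1 : (Fin (m+1) → K) × F := ((Pi.single 0 1 : Fin (m+1) → K), (0:F)) with he1
        have hTe1 : NNaux s (T e1) = t 0 := by rw [hT e1, he1, hNe1]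
        have hje : ∀ j, s j * ‖(T e1).1 j‖ ≤ t 0 := by
          intro j
          calc s j * ‖(T e1).1 j‖ ≤ NNaux s (T e1) := coord_le_NNaux s (T e1) j
            _ = t 0 := hTe1
        have hjlt : ∀ j, s j * ‖(T e1).1 j‖ < t 0 := fun j =>
          lt_of_le_of_ne (hje j) (hA j)
        have hw : ‖(T e1).2‖ = t 0 := by
          have hsuplt : (⨆ j, s j * ‖(T e1).1 j‖) < t 0 := by
            obtain ⟨j, hj⟩ := aux_exists_eq_iSup (fun j => s j * ‖(T e1).1 j‖)
            rw [hj]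
            exact hjlt j
          have h1 := hTe1
          rw [NNaux] at h1
          rcases max_eq_iff.mp h1 with ⟨h2, _⟩ | ⟨h2, _⟩
          · exact absurd h2 hsuplt.ne
          · exact h2
        -- the scalar coefficients
        set c : Fin (n'+1) → K := fun j => (T.symm (Pi.single j ((T e1).1 j), 0)).1 0 with hc
        set cg : K := (T.symm (0, (T e1).2)).1 0 with hcg
        have hsum : (∑ j, c j) + cg = 1 := by
          have h1 : (∑ j, ((Pi.single j ((T e1).1 j) : Fin (n'+1) → K), (0:G)))
              + ((0 : Fin (n'+1) → K), (T e1).2) = T e1 := by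
            refine Prod.ext ?_ ?_
            · have h2 : ((∑ j, ((Pi.single j ((T e1).1 j) : Fin (n'+1) → K), (0:G)))
                  + ((0 : Fin (n'+1) → K), (T e1).2)).1
                  = (∑ j, (Pi.single j ((T e1).1 j) : Fin (n'+1) → K)) + 0 := by
                rw [Prod.fst_add, Prod.fst_sum]
              rw [h2, add_zero, Finset.univ_sum_single]
            · have h2 : ((∑ j, ((Pi.single j ((T e1).1 j) : Fin (n'+1) → K), (0:G)))
                  + ((0 : Fin (n'+1) → K), (T e1).2)).2
                  = (∑ j : Fin (n'+1), (0:G)) + (T e1).2 := by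
                rw [Prod.snd_add, Prod.snd_sum]
              rw [h2, Finset.sum_const, smul_zero, zero_add]
          have h3 := congrArg (fun z => (T.symm z).1 0) h1
          simp only [LinearEquiv.symm_apply_apply] at h3
          rw [map_add, map_sum] at h3
          have h4 : ((∑ j, T.symm ((Pi.single j ((T e1).1 j) : Fin (n'+1) → K), (0:G)))
              + T.symm ((0 : Fin (n'+1) → K), (T e1).2)).1 0
              = (∑ j, (T.symm ((Pi.single j ((T e1).1 j) : Fin (n'+1) → K), (0:G))).1 0)
              + (T.symm ((0 : Fin (n'+1) → K), (T e1).2)).1 0 := by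
            rw [Prod.fst_add, Prod.fst_sum, Pi.add_apply, Finset.sum_apply]
          rw [h4] at h3
          rw [h3]
          simp [he1]
        have hcb : ∀ j, ‖c j‖ < 1 := by
          intro j
          have h1 : t 0 * ‖c j‖ ≤ NNaux t (T.symm (Pi.single j ((T e1).1 j), 0)) :=
            coord_le_NNaux t _ 0
          have h2 : NNaux t (T.symm ((Pi.single j ((T e1).1 j) : Fin (n'+1) → K), (0:G)))
              = s j * ‖(T e1).1 j‖ := by
            rw [← hT (T.symm _), LinearEquiv.apply_symm_apply, NNaux]
            have h3 : ∀ l, l ≠ j → (Pi.single j ((T e1).1 j) : Fin (n'+1) → K) l = 0 :=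
              fun l hl => Pi.single_eq_of_ne hl _
            rw [aux_iSup_single hs _ j h3, Pi.single_eq_same, norm_zero]
            exact max_eq_left (mul_nonneg (hs j).le (norm_nonneg _))
          rw [h2] at h1
          have h5 : t 0 * ‖c j‖ < t 0 * 1 := by
            rw [mul_one]
            exact lt_of_le_of_lt h1 (hjlt j)
          exact (mul_lt_mul_iff_right₀ (ht 0)).mp h5
        have hcg1 : ‖cg‖ = 1 := by
          have hsumlt : ‖∑ j, c j‖ < 1 := by
            obtain ⟨i, _, hle⟩ := exists_norm_finset_sum_le_of_nonempty
              (Finset.univ_nonempty (α := Fin (n'+1))) c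
            exact lt_of_le_of_lt hle (hcb i)
          have h2 : cg = 1 - ∑ j, c j := by rw [← hsum]; ring
          rw [h2, sub_eq_add_neg]
          have h3 : ‖(1:K) + -(∑ j, c j)‖ = max ‖(1:K)‖ ‖-(∑ j, c j)‖ := by
            refine norm_add_eq_max_of_norm_ne_norm ?_
            rw [norm_neg, norm_one]
            exact (ne_of_lt hsumlt).symm
          rw [h3, norm_neg, norm_one]
          exact max_eq_left hsumlt.le
        have hcg0 : cg ≠ 0 := by
          intro h
          rw [h, norm_zero] at hcg1
          exact zero_ne_one hcg1
        -- every element of G is a multiple of w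
        have hspan : ∀ g : G, ∃ μ : K, g = μ • (T e1).2 := by
          by_contra hcon
          push_neg at hcon
          obtain ⟨g0, hg0⟩ := hcon
          apply hG
          set L : G →ₗ[K] K := cg⁻¹ • ((LinearMap.proj (0 : Fin (m+1))).comp
            ((LinearMap.fst K (Fin (m+1) → K) F).comp
              ((T.symm : ((Fin (n'+1) → K) × G) ≃ₗ[K] ((Fin (m+1) → K) × F)).toLinearMap.comp
                (LinearMap.inr K (Fin (n'+1) → K) G)))) with hLdef
          have hLapp : ∀ g, L g = cg⁻¹ * (T.symm ((0 : Fin (n'+1) → K), g)).1 0 := by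
            intro g
            simp only [hLdef, LinearMap.smul_apply, LinearMap.coe_comp,
              Function.comp_apply, smul_eq_mul]
            rfl
          have hLw : L (T e1).2 = 1 := by
            rw [hLapp]
            exact inv_mul_cancel₀ hcg0
          have hLbound : ∀ g, ‖L g‖ * t 0 ≤ ‖g‖ := by
            intro g
            rw [hLapp, norm_mul, norm_inv, hcg1, inv_one, one_mul]
            have h4 : t 0 * ‖(T.symm ((0 : Fin (n'+1) → K), g)).1 0‖
                ≤ NNaux t (T.symm ((0 : Fin (n'+1) → K), g)) := coord_le_NNaux t _ 0
            rw [← hT (T.symm _), LinearEquiv.apply_symm_apply] at h4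
            have h5 : NNaux s ((0 : Fin (n'+1) → K), g) = ‖g‖ := by
              rw [NNaux]
              have h6 : (⨆ l, s l * ‖(0 : Fin (n'+1) → K) l‖) = 0 := by
                refine le_antisymm (Real.iSup_nonpos fun l => ?_)
                  (Real.iSup_nonneg fun l => mul_nonneg (hs l).le (norm_nonneg _))
                rw [Pi.zero_apply, norm_zero, mul_zero]
              rw [h6]
              exact max_eq_right (norm_nonneg _)
            rw [h5] at h4
            calc ‖(T.symm ((0 : Fin (n'+1) → K), g)).1 0‖ * t 0
                = t 0 * ‖(T.symm ((0 : Fin (n'+1) → K), g)).1 0‖ := mul_comm _ _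
              _ ≤ ‖g‖ := h4
          refine ⟨Submodule.span K {(T e1).2}, LinearMap.ker L, ?_, ?_, ?_, ?_⟩
          · intro hbot
            rw [Submodule.span_singleton_eq_bot] at hbot
            rw [hbot, norm_zero] at hw
            exact (ht 0).ne' hw.symm
          · refine Submodule.ne_bot_iff _ |>.mpr ⟨g0 - L g0 • (T e1).2, ?_, ?_⟩
            · rw [LinearMap.mem_ker, map_sub, map_smul, smul_eq_mul, hLw, mul_one, sub_self]
            · intro hz
              exact hg0 (L g0) (by rwa [sub_eq_zero] at hz)
          · rw [eq_top_iff]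
            rintro g -
            refine Submodule.mem_sup.mpr ⟨L g • (T e1).2,
              Submodule.mem_span_singleton.mpr ⟨L g, rfl⟩,
              g - L g • (T e1).2, ?_, by abel⟩
            rw [LinearMap.mem_ker, map_sub, map_smul, smul_eq_mul, hLw, mul_one, sub_self]
          · intro v₁ h₁ v₂ h₂
            obtain ⟨a, ha⟩ := Submodule.mem_span_singleton.mp h₁
            have hLv2 : L v₂ = 0 := LinearMap.mem_ker.mp h₂
            have hLv : L (v₁ + v₂) = a := by
              rw [map_add, hLv2, add_zero, ← ha, map_smul, smul_eq_mul, hLw, mul_one]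
            have h6 : ‖v₁‖ ≤ ‖v₁ + v₂‖ := by
              have h7 := hLbound (v₁ + v₂)
              rw [hLv] at h7
              have h8 : ‖v₁‖ = ‖a‖ * t 0 := by
                rw [← ha, norm_smul, hw]
              rw [h8]
              exact h7
            have h7 : ‖v₂‖ ≤ ‖v₁ + v₂‖ := by
              have h9 : v₂ = (v₁ + v₂) + -v₁ := by abel
              calc ‖v₂‖ = ‖(v₁ + v₂) + -v₁‖ := by conv_lhs => rw [h9]
                _ ≤ max ‖v₁ + v₂‖ ‖-v₁‖ := norm_add_le_max _ _
                _ = max ‖v₁ + v₂‖ ‖v₁‖ := by rw [norm_neg]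
                _ = ‖v₁ + v₂‖ := max_eq_left h6
            exact le_antisymm (norm_add_le_max v₁ v₂) (max_le h6 h7)
        obtain ⟨T'', hT''⟩ := aux_stripG t s ht hs T hT hw hspan
        exact aux_lemB hF hF2 m (fun g : Fin 0 → K => funext fun i => i.elim0)
          (n'+1) _ s (fun i => ht i.succ) hs T'' hT''

end Chunk6

theorem stmt17 {K F G : Type*} [NontriviallyNormedField K] [CompleteSpace K]
    [IsUltrametricDist K]
    [NormedAddCommGroup F] [NormedSpace K F] [IsUltrametricDist F]
    [FiniteDimensional K F]
    [NormedAddCommGroup G] [NormedSpace K G] [IsUltrametricDist G]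
    [FiniteDimensional K G]
    (hKns : ¬ SphericallyComplete K)
    (hF : Indecomposable' K F) (hG : Indecomposable' K G)
    (hF2 : 2 ≤ finrank K F)
    (m n : ℕ) (t : Fin m → ℝ) (s : Fin n → ℝ)
    (ht : ∀ i, 0 < t i) (hs : ∀ j, 0 < s j)
    (hiso : ∃ T : ((Fin m → K) × F) ≃ₗ[K] ((Fin n → K) × G),
      ∀ v : (Fin m → K) × F,
        max (⨆ j, s j * ‖(T v).1 j‖) ‖(T v).2‖ =
          max (⨆ i, t i * ‖v.1 i‖) ‖v.2‖) :
    m = n ∧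
    (∃ T₀ : (Fin m → K) ≃ₗ[K] (Fin n → K),
      ∀ w : Fin m → K, (⨆ j, s j * ‖T₀ w j‖) = ⨆ i, t i * ‖w i‖) ∧
    ∃ T₁ : F ≃ₗ[K] G, ∀ u : F, ‖T₁ u‖ = ‖u‖ := by
  obtain ⟨T, hT⟩ := hiso
  exact aux_main hF hG hF2 m n t s ht hs T (fun v => hT v)
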